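/- arXiv:1905.07794 — 2 statements merged into one kernel-verified Lean document; each statement's English description precedes it below -/
import Mathlib

section
/- The function H(x,y) = (1/2)e^{γx²}y² + (ω²/(2γ))e^{γx²} + ∫ e^{γx²}(αx² + βx³) dx is a first integral (conserved quantity) of the planar system ẋ = y, ẏ = -ω²x - αx² - βx³ - γxy²: along any solution, d/dt H(x(t), y(t)) = 0. -/
open Real intervalIntegral

/-- H is a first integral of ẋ = y, ẏ = -ω²x - αx² - βx³ - γxy². -/
theorem stmt1 (ω α β γ : ℝ) (hγ : γ ≠ 0) (x y : ℝ → ℝ)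
    (hx : ∀ t, HasDerivAt x (y t) t)
    (hy : ∀ t, HasDerivAt y
      (-(ω^2 * x t) - α * x t ^ 2 - β * x t ^ 3 - γ * x t * y t ^ 2) t)
    (F : ℝ → ℝ)
    (hF : ∀ u, F u = ∫ s in (0:ℝ)..u, Real.exp (γ * s^2) * (α * s^2 + β * s^3))
    (H : ℝ → ℝ → ℝ)
    (hH : ∀ u v, H u v = (1/2) * Real.exp (γ * u^2) * v^2
      + (ω^2 / (2*γ)) * Real.exp (γ * u^2) + F u) :
    ∀ t, HasDerivAt (fun s => H (x s) (y s)) 0 t := by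
  intro t
  set f : ℝ → ℝ := fun s => Real.exp (γ * s^2) * (α * s^2 + β * s^3) with hfdef
  have hfc : Continuous f := by fun_prop
  have hFfun : F = fun u => ∫ s in (0:ℝ)..u, f s := funext hF
  have hFd : ∀ u, HasDerivAt F (f u) u := by
    intro u
    rw [hFfun]
    exact intervalIntegral.integral_hasDerivAt_right (hfc.intervalIntegrable _ _)
      (hfc.stronglyMeasurableAtFilter _ _) hfc.continuousAt
  have hx2 : HasDerivAt (fun s => γ * (x s)^2) (γ * ((2:ℕ) * x t ^ 1 * y t)) t :=
    ((hx t).pow 2).const_mul γ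
  have hE : HasDerivAt (fun s => Real.exp (γ * (x s)^2))
      (Real.exp (γ * (x t)^2) * (γ * ((2:ℕ) * x t ^ 1 * y t))) t := hx2.exp
  have hy2 : HasDerivAt (fun s => (y s)^2)
      ((2:ℕ) * y t ^ 1 * (-(ω^2 * x t) - α * x t ^ 2 - β * x t ^ 3 - γ * x t * y t ^ 2)) t :=
    (hy t).pow 2
  have term1 := (hE.mul hy2).const_mul (1/2 : ℝ)
  have term2 := hE.const_mul (ω^2 / (2*γ))
  have term3 := (hFd (x t)).comp t (hx t)
  have total := (term1.add term2).add term3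
  have hfun : (fun s => H (x s) (y s)) =
      fun s => 1/2 * ((fun s => Real.exp (γ * (x s)^2)) s * (fun s => (y s)^2) s)
        + ω^2 / (2*γ) * (fun s => Real.exp (γ * (x s)^2)) s + (F ∘ x) s := by
    funext s
    simp [hH]
    ring
  rw [hfun]
  refine total.congr_deriv ?_
  simp only [hfdef]
  field_simp
  ring
end

section
/- The planar system ẋ = y, ẏ = -ω²x - αx² - βx³ - γxy² can be written in generalized Hamiltonian form: ẋ = a(x) ∂H/∂y and ẏ = -a(x) ∂H/∂x, where a(x) = e^{-γx²} and H is as defined. -/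
/-- The system ẋ = y, ẏ = -ω²x - αx² - βx³ - γxy² is in generalized Hamiltonian
form: ẋ = a(x) ∂H/∂y, ẏ = -a(x) ∂H/∂x with a(x) = e^{-γx²}. -/
theorem stmt2 (ω α β γ : ℝ) (hγ : γ ≠ 0)
    (a : ℝ → ℝ) (ha : ∀ u, a u = Real.exp (-γ * u^2))
    (F : ℝ → ℝ)
    (hF : ∀ u, F u = ∫ s in (0:ℝ)..u, Real.exp (γ * s^2) * (α * s^2 + β * s^3))
    (H : ℝ → ℝ → ℝ)
    (hH : ∀ u v, H u v = (1/2) * Real.exp (γ * u^2) * v^2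
      + (ω^2 / (2*γ)) * Real.exp (γ * u^2) + F u) :
    ∃ Hx Hy : ℝ → ℝ → ℝ,
      (∀ u v, HasDerivAt (fun u' => H u' v) (Hx u v) u) ∧
      (∀ u v, HasDerivAt (fun v' => H u v') (Hy u v) v) ∧
      (∀ u v, v = a u * Hy u v) ∧
      (∀ u v, -(ω^2 * u) - α * u^2 - β * u^3 - γ * u * v^2 = -(a u * Hx u v)) := by
  have hF' : F = fun u => ∫ s in (0:ℝ)..u, Real.exp (γ * s^2) * (α * s^2 + β * s^3) :=
    funext hF
  have hH' : H = fun u v => (1/2) * Real.exp (γ * u^2) * v^2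
      + (ω^2 / (2*γ)) * Real.exp (γ * u^2) + F u := funext fun u => funext (hH u)
  have hexp : ∀ u : ℝ, HasDerivAt (fun u' : ℝ => Real.exp (γ * u'^2))
      (Real.exp (γ * u^2) * (γ * (2*u))) u := by
    intro u
    have h1 : HasDerivAt (fun u' : ℝ => γ * u'^2) (γ * (2*u)) u := by
      simpa using (hasDerivAt_pow 2 u).const_mul γ
    exact h1.exp
  have hcont : Continuous fun s : ℝ => Real.exp (γ * s^2) * (α * s^2 + β * s^3) := by
    continuity
  have hFder : ∀ u : ℝ, HasDerivAt F (Real.exp (γ * u^2) * (α * u^2 + β * u^3)) u := by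
    intro u
    rw [hF']
    exact hcont.integral_hasStrictDerivAt 0 u |>.hasDerivAt
  refine ⟨fun u v => (1/2) * (Real.exp (γ * u^2) * (γ * (2*u))) * v^2
      + (ω^2 / (2*γ)) * (Real.exp (γ * u^2) * (γ * (2*u)))
      + Real.exp (γ * u^2) * (α * u^2 + β * u^3),
    fun u v => Real.exp (γ * u^2) * v,
    fun u v => ?_, fun u v => ?_, fun u v => ?_, fun u v => ?_⟩
  · rw [hH']
    exact (((hexp u).const_mul (1/2)).mul_const (v^2)).add
      ((hexp u).const_mul (ω^2 / (2*γ))) |>.add (hFder u)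
  · rw [hH']
    have h := ((hasDerivAt_pow 2 v).const_mul ((1/2) * Real.exp (γ * u^2))).add_const
      (ω^2 / (2*γ) * Real.exp (γ * u^2) + F u)
    convert h using 1
    · rfl
    · rfl
    · funext x; ring
    · simp; ring
  · rw [ha]
    rw [show -γ * u^2 = -(γ * u^2) by ring, Real.exp_neg]
    field_simp
  · rw [ha]
    rw [show -γ * u^2 = -(γ * u^2) by ring, Real.exp_neg]
    have hE := Real.exp_ne_zero (γ * u^2)
    field_simp
    ring
end
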